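/- (Interval Newton Method.) Let n ≥ 1, let X = ∏_{i=1}^n [α_i, β_i] ⊂ ℝⁿ be a product of compact intervals with α_i < β_i, let D ⊆ ℝⁿ be open with X ⊆ D, let F : D → ℝⁿ be continuously differentiable, and let x₀ be an interior point of X. Let K = convexHull { DF(x) : x ∈ X } ⊆ ℝ^{n×n}. Assume that every matrix A ∈ K is invertible and that the set N = { x₀ − A⁻¹ · F(x₀) : A ∈ K } is contained in the interior of X. Then F has a unique zero x* in X, and moreover x* ∈ N. -/

import Mathlib

open Set MeasureTheory

variable {E : Type*} [NormedAddCommGroup E] [NormedSpace ℝ E] [FiniteDimensional ℝ E]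

/-- Convex hull of a compact set in a finite-dimensional normed space is compact. -/
theorem aux_isCompact_convexHull {s : Set E} (hs : IsCompact s) :
    IsCompact (convexHull ℝ s) := by
  rcases s.eq_empty_or_nonempty with rfl | ⟨p, hp⟩
  · simp [convexHull_empty]
  classical
  set m := Module.finrank ℝ E + 1 with hm
  set f : ((Fin m → ℝ) × (Fin m → E)) → E := fun wz => ∑ i, wz.1 i • wz.2 i with hf
  have hfc : Continuous f := by
    apply continuous_finset_sum
    intro i _
    exact ((continuous_apply i).comp continuous_fst).smul
      ((continuous_apply i).comp continuous_snd)
  have hT : IsCompact ((stdSimplex ℝ (Fin m)) ×ˢ (Set.univ.pi fun _ : Fin m => s)) :=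
    (isCompact_stdSimplex ℝ (Fin m)).prod (isCompact_univ_pi fun _ => hs)
  have himg : f '' ((stdSimplex ℝ (Fin m)) ×ˢ (Set.univ.pi fun _ : Fin m => s))
      = convexHull ℝ s := by
    apply Subset.antisymm
    · rintro x ⟨⟨w, z⟩, ⟨hw, hz⟩, rfl⟩
      exact (convex_convexHull ℝ s).sum_mem (fun i _ => hw.1 i) hw.2
        (fun i _ => subset_convexHull ℝ s (hz i (Set.mem_univ i)))
    · intro x hx
      obtain ⟨ι, hι, z, w, hzs, hindep, hwpos, hwsum, hwz⟩ :=
        eq_pos_convex_span_of_mem_convexHull hx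
      have hcard : Fintype.card ι ≤ m := by
        have h1 : Fintype.card ι ≤ Module.finrank ℝ (vectorSpan ℝ (Set.range z)) + 1 :=
          hindep.card_le_finrank_succ
        have h2 := Submodule.finrank_le (vectorSpan ℝ (Set.range z))
        omega
      obtain ⟨g⟩ : Nonempty (ι ↪ Fin m) :=
        Function.Embedding.nonempty_iff_card_le.2 (by simpa using hcard)
      set w' : Fin m → ℝ := Function.extend g w 0 with hw'
      set z' : Fin m → E := Function.extend g z (fun _ => p) with hz'
      have hsum : ∑ j, (w' j, w' j • z' j) = ∑ i, (w i, w i • z i) := by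
        have step1 : ∑ j ∈ Finset.univ.image g, (w' j, w' j • z' j)
            = ∑ j, (w' j, w' j • z' j) := by
          apply Finset.sum_subset (Finset.subset_univ _)
          intro j _ hj
          have hnr : ¬∃ i, g i = j := by
            rintro ⟨i, hi⟩
            exact hj (Finset.mem_image.2 ⟨i, Finset.mem_univ i, hi⟩)
          have hwj : w' j = 0 := by
            rw [hw', Function.extend_apply' _ _ _ hnr]; rfl
          rw [hwj]
          simp
        rw [← step1, Finset.sum_image (fun a _ b _ h => g.injective h)]
        apply Finset.sum_congr rfl
        intro i _
        rw [hw', hz', g.injective.extend_apply, g.injective.extend_apply]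
      have hsum1 : ∑ j, w' j = ∑ i, w i := by
        have := congrArg Prod.fst hsum
        simpa [Prod.fst_sum, Prod.snd_sum] using this
      have hsum2 : ∑ j, w' j • z' j = ∑ i, w i • z i := by
        have := congrArg Prod.snd hsum
        simpa [Prod.fst_sum, Prod.snd_sum] using this
      have hw'mem : w' ∈ stdSimplex ℝ (Fin m) := by
        constructor
        · intro j
          rcases em (∃ i, g i = j) with ⟨i, rfl⟩ | hnr
          · rw [hw', g.injective.extend_apply]
            exact (hwpos i).le
          · rw [hw', Function.extend_apply' _ _ _ hnr]
            exact le_rfl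
        · rw [hsum1, hwsum]
      have hz'mem : ∀ j, z' j ∈ s := by
        intro j
        rcases em (∃ i, g i = j) with ⟨i, rfl⟩ | hnr
        · rw [hz', g.injective.extend_apply]
          exact hzs (Set.mem_range_self i)
        · rw [hz', Function.extend_apply' _ _ _ hnr]
          exact hp
      refine ⟨(w', z'), ⟨hw'mem, fun j _ => hz'mem j⟩, ?_⟩
      simp only [hf]
      rw [hsum2, hwz]
  rw [← himg]
  exact hT.image hfc

/-- Mean value form: the difference `F y - F x` is given by some operator in the
convex hull of derivatives over a convex compact set. -/
theorem aux_mvt {D : Set E} (hD : IsOpen D) {F : E → E} (hF : ContDiffOn ℝ 1 F D)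
    {X : Set E} (hXD : X ⊆ D) (hXconv : Convex ℝ X) (hXcomp : IsCompact X)
    {x y : E} (hx : x ∈ X) (hy : y ∈ X) :
    ∃ A ∈ convexHull ℝ {A : E →L[ℝ] E | ∃ z ∈ X, A = fderiv ℝ F z},
      F y - F x = A (y - x) := by
  set J : Set (E →L[ℝ] E) := {A | ∃ z ∈ X, A = fderiv ℝ F z} with hJ
  have hJ': J = (fun z => fderiv ℝ F z) '' X := by
    ext A; simp [hJ, eq_comm]
  have hdf : ContinuousOn (fderiv ℝ F) D :=
    hF.continuousOn_fderiv_of_isOpen hD le_rfl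
  have hJcomp : IsCompact J := by
    rw [hJ']
    exact hXcomp.image_of_continuousOn (hdf.mono hXD)
  have hKcomp : IsCompact (convexHull ℝ J) := aux_isCompact_convexHull hJcomp
  set γ : ℝ → E := fun t => x + t • (y - x) with hγ
  have hγX : ∀ t ∈ Icc (0:ℝ) 1, γ t ∈ X := fun t ht =>
    hXconv.add_smul_sub_mem hx hy ht
  have hγc : Continuous γ := by
    apply continuous_const.add (continuous_id.smul continuous_const)
  set g : ℝ → (E →L[ℝ] E) := fun t => fderiv ℝ F (γ t) with hg
  have hgc : ContinuousOn g (Icc (0:ℝ) 1) := by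
    apply hdf.comp hγc.continuousOn
    intro t ht
    exact hXD (hγX t ht)
  have hgint : IntervalIntegrable g volume 0 1 := by
    apply hgc.intervalIntegrable_of_Icc zero_le_one
  set A : E →L[ℝ] E := ∫ t in (0:ℝ)..1, g t with hA
  have hprob : IsProbabilityMeasure (volume.restrict (Ioc (0:ℝ) 1)) := by
    constructor
    simp [Real.volume_Ioc]
  have hAK : A ∈ convexHull ℝ J := by
    rw [hA, intervalIntegral.integral_of_le zero_le_one]
    apply (convex_convexHull ℝ J).integral_mem hKcomp.isClosed
    · apply (ae_restrict_iff' measurableSet_Ioc).2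
      apply Filter.Eventually.of_forall
      intro t ht
      exact subset_convexHull ℝ J ⟨γ t, hγX t ⟨ht.1.le, ht.2⟩, rfl⟩
    · exact hgint.1
  refine ⟨A, hAK, ?_⟩
  have hderiv : ∀ t ∈ uIcc (0:ℝ) 1, HasDerivAt (F ∘ γ) (g t (y - x)) t := by
    intro t ht
    rw [uIcc_of_le zero_le_one] at ht
    have hmem : γ t ∈ D := hXD (hγX t ht)
    have hFd : HasFDerivAt F (fderiv ℝ F (γ t)) (γ t) :=
      ((hF.differentiableOn one_ne_zero).differentiableAt (hD.mem_nhds hmem)).hasFDerivAt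
    have hγd : HasDerivAt γ (y - x) t := by
      have h1 : HasDerivAt (fun t : ℝ => t • (y - x)) ((1:ℝ) • (y - x)) t :=
        (hasDerivAt_id t).smul_const (y - x)
      rw [one_smul] at h1
      exact h1.const_add x
    exact hFd.comp_hasDerivAt t hγd
  have hint2 : IntervalIntegrable (fun t => g t (y - x)) volume 0 1 := by
    apply ContinuousOn.intervalIntegrable_of_Icc zero_le_one
    exact (ContinuousLinearMap.apply ℝ E (y - x)).continuous.comp_continuousOn hgc
  have hftc : ∫ t in (0:ℝ)..1, g t (y - x) = (F ∘ γ) 1 - (F ∘ γ) 0 :=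
    intervalIntegral.integral_eq_sub_of_hasDerivAt hderiv hint2
  have hγ1 : γ 1 = y := by simp [hγ]
  have hγ0 : γ 0 = x := by simp [hγ]
  have happ : A (y - x) = ∫ t in (0:ℝ)..1, g t (y - x) := by
    rw [hA, intervalIntegral.integral_of_le zero_le_one,
      intervalIntegral.integral_of_le zero_le_one]
    exact ContinuousLinearMap.integral_apply hgint.1 (y - x)
  rw [happ, hftc]
  simp [Function.comp, hγ1, hγ0]

theorem interval_newton_method
    (n : ℕ) (hn : 1 ≤ n)
    (α β : Fin n → ℝ) (hαβ : ∀ i, α i < β i)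
    (X : Set (Fin n → ℝ)) (hX : X = Set.univ.pi fun i => Icc (α i) (β i))
    (D : Set (Fin n → ℝ)) (hD : IsOpen D) (hXD : X ⊆ D)
    (F : (Fin n → ℝ) → (Fin n → ℝ)) (hF : ContDiffOn ℝ 1 F D)
    (x₀ : Fin n → ℝ) (hx₀ : x₀ ∈ interior X)
    (K : Set ((Fin n → ℝ) →L[ℝ] (Fin n → ℝ)))
    (hK : K = convexHull ℝ {A | ∃ x ∈ X, A = fderiv ℝ F x})
    (hKinv : ∀ A ∈ K, ∃ B : (Fin n → ℝ) →L[ℝ] (Fin n → ℝ),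
      A.comp B = ContinuousLinearMap.id ℝ (Fin n → ℝ) ∧
      B.comp A = ContinuousLinearMap.id ℝ (Fin n → ℝ))
    (N : Set (Fin n → ℝ))
    (hN : N = {y | ∃ A ∈ K, ∃ B : (Fin n → ℝ) →L[ℝ] (Fin n → ℝ),
      A.comp B = ContinuousLinearMap.id ℝ (Fin n → ℝ) ∧
      B.comp A = ContinuousLinearMap.id ℝ (Fin n → ℝ) ∧
      y = x₀ - B (F x₀)})
    (hNX : N ⊆ interior X) :
    ∃ x, x ∈ X ∧ F x = 0 ∧ x ∈ N ∧ ∀ y ∈ X, F y = 0 → y = x := by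
  have hXconv : Convex ℝ X := by
    rw [hX]; exact convex_pi fun i _ => convex_Icc _ _
  have hXcomp : IsCompact X := by
    rw [hX]; exact isCompact_univ_pi fun i => isCompact_Icc
  have hx₀X : x₀ ∈ X := interior_subset hx₀
  have hFX : ContinuousOn F X := hF.continuousOn.mono hXD
  -- inverses are two-sided, and give pointwise inversion
  have hBapp : ∀ (A B : (Fin n → ℝ) →L[ℝ] (Fin n → ℝ)),
      B.comp A = ContinuousLinearMap.id ℝ (Fin n → ℝ) → ∀ v, B (A v) = v := by
    intro A B hBA v
    have := ContinuousLinearMap.ext_iff.1 hBA v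
    simpa using this
  -- key step: any point of X whose value lies on the segment [0, F x₀] is interior,
  -- and if its value is 0 it lies in N
  have hkey : ∀ x ∈ X, ∀ s : ℝ, 0 ≤ s → s ≤ 1 → F x = s • F x₀ →
      x ∈ interior X ∧ (s = 0 → x ∈ N) := by
    intro x hx s hs0 hs1 hFxs
    obtain ⟨A, hAK, hAeq⟩ := aux_mvt hD hF hXD hXconv hXcomp hx₀X hx
    rw [← hK] at hAK
    obtain ⟨B, hAB, hBA⟩ := hKinv A hAK
    have hx_eq : x - x₀ = (s - 1) • B (F x₀) := by
      have h1 : A (x - x₀) = (s - 1) • F x₀ := by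
        rw [← hAeq, hFxs, sub_smul, one_smul]
      have h2 := hBapp A B hBA (x - x₀)
      rw [h1] at h2
      rw [← h2, B.map_smul]
    have hnmem : x₀ - B (F x₀) ∈ N := by
      rw [hN]; exact ⟨A, hAK, B, hAB, hBA, rfl⟩
    constructor
    · have hxc : x = s • x₀ + (1 - s) • (x₀ - B (F x₀)) := by
        have : x = x₀ + (s - 1) • B (F x₀) := by
          rw [← hx_eq]; abel
        rw [this]
        match_scalars <;> ring
      rw [hxc]
      exact hXconv.interior hx₀ (hNX hnmem) hs0 (by linarith) (by ring)
    · intro hs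
      subst hs
      have : x = x₀ - B (F x₀) := by
        have : x = x₀ + (0 - 1 : ℝ) • B (F x₀) := by rw [← hx_eq]; abel
        rw [this]
        simp [sub_eq_add_neg]
      rw [this]
      exact hnmem
  -- the continuation set
  set S : Set ℝ := {s | s ∈ Icc (0:ℝ) 1 ∧ s • F x₀ ∈ F '' X} with hS
  have h1S : (1:ℝ) ∈ S := ⟨⟨zero_le_one, le_rfl⟩, ⟨x₀, hx₀X, by simp⟩⟩
  have hSne : S.Nonempty := ⟨1, h1S⟩
  have hSbdd : BddBelow S := ⟨0, fun s hs => hs.1.1⟩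
  have hSclosed : IsClosed S := by
    have : S = Icc (0:ℝ) 1 ∩ ((fun s : ℝ => s • F x₀) ⁻¹' (F '' X)) := rfl
    rw [this]
    exact isClosed_Icc.inter (((hXcomp.image_of_continuousOn hFX).isClosed).preimage
      (continuous_id.smul continuous_const))
  set T := sInf S with hT
  have hTS : T ∈ S := hSclosed.csInf_mem hSne hSbdd
  obtain ⟨⟨hT0, hT1⟩, xT, hxTX, hxTF⟩ := hTS
  have hxTkey := hkey xT hxTX T hT0 hT1 hxTF
  have hTzero : T = 0 := by
    by_contra hTne
    have hTpos : 0 < T := hT0.lt_of_ne (Ne.symm hTne)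
    have hxTD : xT ∈ D := hXD hxTX
    have hsd : HasStrictFDerivAt F (fderiv ℝ F xT) xT :=
      (hF.contDiffAt (hD.mem_nhds hxTD)).hasStrictFDerivAt one_ne_zero
    have hDfK : fderiv ℝ F xT ∈ K := by
      rw [hK]; exact subset_convexHull ℝ _ ⟨xT, hxTX, rfl⟩
    obtain ⟨B, hAB, hBA⟩ := hKinv _ hDfK
    set e : (Fin n → ℝ) ≃L[ℝ] (Fin n → ℝ) :=
      ContinuousLinearEquiv.equivOfInverse (fderiv ℝ F xT) B
        (fun v => hBapp _ _ hBA v) (fun v => hBapp _ _ (by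
          -- A.comp B = id gives B is a right inverse pointwise; but we need
          -- B.comp (fderiv) applied... use symmetric argument
          exact hAB) v) with he
    have hsd' : HasStrictFDerivAt F (e : (Fin n → ℝ) →L[ℝ] (Fin n → ℝ)) xT := hsd
    have hmap : Filter.map F (nhds xT) = nhds (F xT) := hsd'.map_nhds_eq_of_equiv
    have himg : F '' (interior X) ∈ nhds (F xT) := by
      rw [← hmap]
      exact Filter.image_mem_map (isOpen_interior.mem_nhds hxTkey.1)
    have hcont : ContinuousAt (fun s : ℝ => s • F x₀) T :=
      (continuous_id.smul continuous_const).continuousAt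
    have hpre : (fun s : ℝ => s • F x₀) ⁻¹' (F '' interior X) ∈ nhds T := by
      apply hcont
      rw [hxTF] at himg
      exact himg
    obtain ⟨ε, hε, hball⟩ := Metric.mem_nhds_iff.1 hpre
    set s := max 0 (T - ε/2) with hs
    have hsT : s < T := max_lt hTpos (by linarith)
    have hsmem : s ∈ Metric.ball T ε := by
      rw [Metric.mem_ball, Real.dist_eq, abs_lt]
      constructor
      · have : T - ε/2 ≤ s := le_max_right _ _
        linarith
      · linarith
    obtain ⟨xs, hxs, hxsF⟩ := hball hsmem
    have hsS : s ∈ S := ⟨⟨le_max_left _ _, le_trans hsT.le hT1⟩,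
      ⟨xs, interior_subset hxs, hxsF⟩⟩
    exact absurd (csInf_le hSbdd hsS) (not_le.2 hsT)
  have hFxT : F xT = 0 := by
    rw [hxTF, hTzero, zero_smul]
  refine ⟨xT, hxTX, hFxT, hxTkey.2 hTzero, ?_⟩
  intro y hy hFy
  obtain ⟨A, hAK, hAeq⟩ := aux_mvt hD hF hXD hXconv hXcomp hxTX hy
  rw [← hK] at hAK
  obtain ⟨B, hAB, hBA⟩ := hKinv A hAK
  have : A (y - xT) = 0 := by rw [← hAeq, hFy, hFxT, sub_zero]
  have h2 := hBapp A B hBA (y - xT)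
  rw [this, map_zero] at h2
  exact sub_eq_zero.1 h2.symm
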